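/- Let M be a positive natural number, w, x : Fin M → ℝ, y ∈ ℝ, and ε > 0. Assume a := (∑ i, w i · x i) − y ≠ 0. Define δ⋆ : Fin M → ℝ by δ⋆ i = ε·sign(a)·sign(w i), where sign is the real sign function (sign 0 = 0). Then for every δ : Fin M → ℝ with |δ i| ≤ ε for all i, the squared error satisfies ((∑ i, w i · (x i + δ i)) − y)² ≤ ((∑ i, w i · (x i + δ⋆ i)) − y)². In other words, δ⋆ maximizes the least-mean-squares loss over the closed ℓ∞-ball of radius ε. -/

import Mathlib

open Finset

lemma self_mul_sign' (x : ℝ) : x * Real.sign x = |x| := by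
  rcases lt_trichotomy x 0 with h | h | h
  · rw [Real.sign_of_neg h, abs_of_neg h]; ring
  · simp [h]
  · rw [Real.sign_of_pos h, abs_of_pos h]; ring

/-- Closed-form solution of the inner maximization for the least-mean-squares loss
under `ℓ∞`-bounded attacks: `δ⋆ i = ε·sign(wᵀx − y)·sign(w i)` maximizes the squared
error over the closed `ℓ∞`-ball of radius `ε`. -/
theorem lms_loss_linf_worst_case_perturbation
    (M : ℕ) (hM : 0 < M) (w x : Fin M → ℝ) (y : ℝ)
    (ha : (∑ i, w i * x i) - y ≠ 0) (ε : ℝ) (hε : 0 < ε) :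
    ∀ δ : Fin M → ℝ, (∀ i, |δ i| ≤ ε) →
      ((∑ i, w i * (x i + δ i)) - y) ^ 2 ≤
        ((∑ i, w i * (x i + ε * Real.sign ((∑ j, w j * x j) - y) * Real.sign (w i))) - y) ^ 2 := by
  intro δ hδ
  set a : ℝ := (∑ i, w i * x i) - y with hadef
  have h1 : ∀ d : Fin M → ℝ, ((∑ i, w i * (x i + d i)) - y) = a + ∑ i, w i * d i := by
    intro d
    simp only [mul_add, Finset.sum_add_distrib, hadef]
    ring
  rw [h1, h1]
  set S : ℝ := ∑ i, |w i| with hSdef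
  have hS0 : 0 ≤ S := Finset.sum_nonneg fun i _ => abs_nonneg _
  have hstar : (∑ i, w i * (ε * Real.sign a * Real.sign (w i))) = ε * Real.sign a * S := by
    rw [hSdef, Finset.mul_sum]
    refine Finset.sum_congr rfl fun i _ => ?_
    rw [← self_mul_sign' (w i)]; ring
  rw [hstar]
  have hsign : |Real.sign a| = 1 := by
    rcases lt_trichotomy a 0 with h | h | h
    · rw [Real.sign_of_neg h]; norm_num
    · exact absurd h ha
    · rw [Real.sign_of_pos h]; norm_num
  have hrhs : |a + ε * Real.sign a * S| = |a| + ε * S := by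
    have : a + ε * Real.sign a * S = Real.sign a * (|a| + ε * S) := by
      rw [mul_add]
      have h2 : Real.sign a * |a| = a := by
        rcases lt_trichotomy a 0 with h | h | h
        · rw [Real.sign_of_neg h, abs_of_neg h]; ring
        · exact absurd h ha
        · rw [Real.sign_of_pos h, abs_of_pos h]; ring
      rw [h2]; ring
    rw [this, abs_mul, hsign, one_mul,
      abs_of_nonneg (by positivity : (0:ℝ) ≤ |a| + ε * S)]
  have hlhs : |a + ∑ i, w i * δ i| ≤ |a| + ε * S := by
    refine (abs_add_le _ _).trans (add_le_add_right ?_ _)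
    calc |∑ i, w i * δ i| ≤ ∑ i, |w i * δ i| := Finset.abs_sum_le_sum_abs _ _
      _ ≤ ∑ i, |w i| * ε := by
          refine Finset.sum_le_sum fun i _ => ?_
          rw [abs_mul]
          exact mul_le_mul_of_nonneg_left (hδ i) (abs_nonneg _)
      _ = ε * S := by rw [hSdef, Finset.mul_sum]; exact Finset.sum_congr rfl fun i _ => mul_comm _ _
  calc (a + ∑ i, w i * δ i) ^ 2 = |a + ∑ i, w i * δ i| ^ 2 := (sq_abs _).symm
    _ ≤ (|a| + ε * S) ^ 2 := pow_le_pow_left₀ (abs_nonneg _) hlhs 2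
    _ = |a + ε * Real.sign a * S| ^ 2 := by rw [hrhs]
    _ = (a + ε * Real.sign a * S) ^ 2 := sq_abs _
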